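/- Let n be a natural number and let W_n act on ℤ^n via the representation ρ. Then the second group cohomology H²(W_n, ℤ^n) is isomorphic to (ℤ/2)^n. -/

import Mathlib

/-- The relators `x̄_i²` of `W_n`, the free product of `n` copies of `C_2`. -/
def Wrels (n : ℕ) : Set (FreeGroup (Fin n)) :=
  Set.range fun i : Fin n => FreeGroup.of i ^ 2

/-- The group `W_n = C_2 * ⋯ * C_2` (`n` factors). -/
abbrev W (n : ℕ) : Type := PresentedGroup (Wrels n)

/-- The generators `x̄_1, …, x̄_n` of `W_n`. -/
def xbar (n : ℕ) (i : Fin n) : W n := PresentedGroup.of i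

/-- The linear map `diag(-1, …, -1, 1, -1, …, -1)` on `ℤⁿ` (entry `1` in position `i`). -/
def Dmap (n : ℕ) (i : Fin n) : (Fin n → ℤ) →ₗ[ℤ] (Fin n → ℤ) where
  toFun v := fun j => if j = i then v j else -v j
  map_add' u v := by funext j; by_cases h : j = i <;> simp [h] <;> ring
  map_smul' c v := by funext j; by_cases h : j = i <;> simp [h]

theorem Dmap_sq (n : ℕ) (i : Fin n) : Dmap n i * Dmap n i = 1 := by
  apply LinearMap.ext
  intro v
  funext j
  by_cases h : j = i <;> simp [Dmap, Module.End.mul_apply, h]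

/-- `Dmap n i` as a unit of the endomorphism ring, i.e. a linear automorphism. -/
def Dunit (n : ℕ) (i : Fin n) : ((Fin n → ℤ) →ₗ[ℤ] (Fin n → ℤ))ˣ :=
  ⟨Dmap n i, Dmap n i, Dmap_sq n i, Dmap_sq n i⟩

theorem Dunit_sq (n : ℕ) (i : Fin n) : Dunit n i ^ 2 = 1 := by
  rw [sq]
  exact Units.ext (Dmap_sq n i)

/-- The representation `ρ : W_n → GL_n(ℤ)`, with `ρ(x̄_i) = diag(-1,…,-1,1,-1,…,-1)`. -/
def rho (n : ℕ) : W n →* ((Fin n → ℤ) →ₗ[ℤ] (Fin n → ℤ))ˣ :=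
  PresentedGroup.toGroup (f := Dunit n) (by
    rintro r ⟨i, rfl⟩
    simp [Dunit_sq])

theorem rho_of (n : ℕ) (i : Fin n) : rho n (xbar n i) = Dunit n i :=
  PresentedGroup.toGroup.of _

/-- `ρ` as a representation of `W_n` on `ℤⁿ`. -/
def rep (n : ℕ) : Representation ℤ (W n) (Fin n → ℤ) :=
  (Units.coeHom ((Fin n → ℤ) →ₗ[ℤ] (Fin n → ℤ))).comp (rho n)


open groupCohomology

/-! ### Basic facts about `W n` and `rep n` -/

theorem xbar_sq (n : ℕ) (i : Fin n) : xbar n i ^ 2 = 1 := by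
  have : PresentedGroup.mk (Wrels n) (FreeGroup.of i ^ 2) = 1 := by
    refine (QuotientGroup.eq_one_iff _).2 ?_
    exact Subgroup.subset_normalClosure ⟨i, rfl⟩
  simpa [xbar, PresentedGroup.of, map_pow] using this

/-- The sign `(-1)^a` for `a : ZMod 2`. -/
def sgn (a : ZMod 2) : ℤ := if a = 0 then 1 else -1

theorem sgn_add : ∀ a b : ZMod 2, sgn (a + b) = sgn a * sgn b := by decide

theorem sgn_mul_self : ∀ a : ZMod 2, sgn a * sgn a = 1 := by decide

/-- The homomorphism `W n → K₄` recording (parity of occurrences of `x_j`,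
parity of occurrences of the other generators). -/
def Q (n : ℕ) (j : Fin n) : W n →* Multiplicative (ZMod 2 × ZMod 2) :=
  PresentedGroup.toGroup
    (f := fun i => Multiplicative.ofAdd (if i = j then ((1 : ZMod 2), (0 : ZMod 2)) else (0, 1)))
    (by
      rintro r ⟨i, rfl⟩
      rw [map_pow, FreeGroup.lift_apply_of]
      refine Multiplicative.toAdd.injective ?_
      rw [toAdd_pow]
      split <;> decide)

theorem Q_of (n : ℕ) (j i : Fin n) :
    Q n j (xbar n i)
      = Multiplicative.ofAdd (if i = j then ((1 : ZMod 2), (0 : ZMod 2)) else (0, 1)) := by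
  simp [Q, xbar]

/-- The coordinate behaviour of the representation. -/
theorem rep_coord (n : ℕ) (j : Fin n) (g : W n) (v : Fin n → ℤ) :
    rep n g v j = sgn (Multiplicative.toAdd (Q n j g)).2 * v j := by
  let S : Subgroup (W n) :=
    { carrier := {g | ∀ v : Fin n → ℤ, rep n g v j = sgn (Multiplicative.toAdd (Q n j g)).2 * v j}
      one_mem' := by intro v; simp [sgn]
      mul_mem' := by
        intro a b ha hb v
        have : rep n (a * b) v = rep n a (rep n b v) := by
          simp [map_mul, Module.End.mul_apply]
        rw [this, ha, hb, map_mul, toAdd_mul, Prod.snd_add, sgn_add]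
        ring
      inv_mem' := by
        intro a ha v
        have h1 : rep n a (rep n a⁻¹ v) = v := by
          rw [← Module.End.mul_apply, ← map_mul, mul_inv_cancel, map_one, Module.End.one_apply]
        have h2 := ha (rep n a⁻¹ v)
        rw [h1] at h2
        have haux : ∀ c : Multiplicative (ZMod 2 × ZMod 2),
            (Multiplicative.toAdd c⁻¹).2 = (Multiplicative.toAdd c).2 := by decide
        have h3 : (Multiplicative.toAdd ((Q n j) a⁻¹)).2 = (Multiplicative.toAdd ((Q n j) a)).2 := by
          rw [map_inv]; exact haux _
        rw [h3]
        calc rep n a⁻¹ v j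
            = sgn (Multiplicative.toAdd (Q n j a)).2 *
              (sgn (Multiplicative.toAdd (Q n j a)).2 * rep n a⁻¹ v j) := by
              rw [← mul_assoc, sgn_mul_self, one_mul]
          _ = sgn (Multiplicative.toAdd (Q n j a)).2 * v j := by rw [← h2] }
  have hgen : ∀ i : Fin n, ∀ v : Fin n → ℤ,
      rep n (xbar n i) v j = sgn (Multiplicative.toAdd (Q n j (xbar n i))).2 * v j := by
    intro i v
    have hrep : rep n (xbar n i) v = Dmap n i v := by
      simp [rep, rho_of, Dunit]
    rw [hrep, Q_of]
    by_cases h : i = j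
    · subst h; simp [Dmap, sgn]
    · have : j ≠ i := fun hh => h hh.symm
      simp [Dmap, this, h, sgn]
  have : S = ⊤ := by
    rw [eq_top_iff, ← PresentedGroup.closure_range_of (Wrels n), Subgroup.closure_le]
    rintro _ ⟨i, rfl⟩
    exact hgen i
  exact (this ▸ Subgroup.mem_top g : g ∈ S) v

/-! ### An explicit family of 2-cocycles -/

/-- The 2-cocycle of the extension `ℤ → D∞ → K₄`. -/
def cInf (x y : ZMod 2 × ZMod 2) : ℤ :=
  ((x.1.val : ℤ) + sgn x.2 * y.1.val - ((x.1 + y.1).val : ℤ)) / 2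

theorem cInf_cocycle : ∀ x y z : ZMod 2 × ZMod 2,
    cInf (x + y) z + cInf x y = sgn x.2 * cInf y z + cInf x (y + z) := by decide

/-- The explicit 2-cocycle of `W n` with values in `ℤⁿ`, supported in coordinate `j`. -/
def fco (n : ℕ) (j : Fin n) : W n × W n → (Fin n → ℤ) := fun p i =>
  if i = j then cInf (Multiplicative.toAdd (Q n j p.1)) (Multiplicative.toAdd (Q n j p.2)) else 0

theorem rep_of_coord (n : ℕ) (g : W n) (w : Fin n → ℤ) (i : Fin n) :
    ((Rep.of (rep n)).ρ g w) i = sgn (Multiplicative.toAdd (Q n i g)).2 * w i :=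
  rep_coord n i g w

theorem fco_mem (n : ℕ) (j : Fin n) : fco n j ∈ groupCohomology.cocycles₂ (Rep.of (rep n)) := by
  rw [groupCohomology.mem_cocycles₂_iff]
  intro g h k
  funext i
  show fco n j (g * h, k) i + fco n j (g, h) i
      = ((Rep.of (rep n)).ρ g (fco n j (h, k))) i + fco n j (g, h * k) i
  rw [rep_of_coord]
  have hm : ∀ a b : W n, Multiplicative.toAdd (Q n j (a * b))
      = Multiplicative.toAdd (Q n j a) + Multiplicative.toAdd (Q n j b) := fun a b => by
    rw [map_mul]; rfl
  by_cases hi : i = j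
  · subst hi
    simp only [fco, if_pos rfl, hm]
    exact cInf_cocycle _ _ _
  · simp [fco, hi]

/-! ### The invariant map `Φ` -/

open groupCohomology

/-- Evaluation of a 2-cocycle, viewed as taking values in `ℤⁿ`. -/
def ev (n : ℕ) (f : cocycles₂ (Rep.of (rep n))) (p : W n × W n) : Fin n → ℤ := f.1 p

theorem ev_add (n : ℕ) (f g : cocycles₂ (Rep.of (rep n))) (p : W n × W n) :
    ev n (f + g) p = ev n f p + ev n g p := rfl

theorem ev_smul (n : ℕ) (c : ℤ) (f : cocycles₂ (Rep.of (rep n))) (p : W n × W n) :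
    ev n (c • f) p = c • ev n f p := rfl

/-- The invariant `Φ(f)ᵢ = f(x̄ᵢ, x̄ᵢ)ᵢ + f(1,1)ᵢ mod 2`. -/
def Phi (n : ℕ) : cocycles₂ (Rep.of (rep n)) →ₗ[ℤ] (Fin n → ZMod 2) where
  toFun f := fun i => ((ev n f (xbar n i, xbar n i) i + ev n f (1, 1) i : ℤ) : ZMod 2)
  map_add' f g := by
    funext i
    dsimp only
    rw [Pi.add_apply, ev_add, ev_add, Pi.add_apply, Pi.add_apply]
    push_cast
    ring
  map_smul' c f := by
    funext i
    dsimp only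
    simp only [RingHom.id_apply, Pi.smul_apply, ev_smul, smul_eq_mul, zsmul_eq_mul]
    push_cast
    ring

theorem Phi_fco (n : ℕ) (j : Fin n) :
    Phi n ⟨fco n j, fco_mem n j⟩ = fun i => if i = j then 1 else 0 := by
  funext i
  show ((fco n j (xbar n i, xbar n i) i + fco n j (1, 1) i : ℤ) : ZMod 2) = _
  by_cases hi : i = j
  · subst hi
    have h1 : Multiplicative.toAdd (Q n i (xbar n i)) = ((1 : ZMod 2), (0 : ZMod 2)) := by
      rw [Q_of, if_pos rfl]; rfl
    have h2 : Multiplicative.toAdd (Q n i (1 : W n)) = ((0 : ZMod 2), (0 : ZMod 2)) := by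
      rw [map_one]; rfl
    simp only [fco, if_pos rfl, h1, h2]
    decide
  · simp [fco, hi]

theorem Phi_surjective (n : ℕ) : Function.Surjective (Phi n) := by
  intro v
  refine ⟨∑ j, ((v j).val : ℤ) • ⟨fco n j, fco_mem n j⟩, ?_⟩
  rw [map_sum]
  funext i
  rw [Finset.sum_apply]
  have : ∀ j, (Phi n (((v j).val : ℤ) • ⟨fco n j, fco_mem n j⟩)) i
      = ((v j).val : ℤ) • (if i = j then (1 : ZMod 2) else 0) := by
    intro j
    rw [LinearMap.map_smul, Phi_fco]
    rfl
  simp only [this]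
  rw [Finset.sum_eq_single i ?_ ?_]
  · rw [if_pos rfl, zsmul_eq_mul, mul_one]
    push_cast
    exact ZMod.natCast_rightInverse (v i)
  · intro b _ hb
    rw [if_neg (Ne.symm hb), smul_zero]
  · intro h
    exact absurd (Finset.mem_univ i) h

/-! ### `Φ` vanishes on coboundaries -/

theorem xbar_mul_self (n : ℕ) (i : Fin n) : xbar n i * xbar n i = 1 := by
  rw [← sq]; exact xbar_sq n i

theorem sgn_Q_xbar (n : ℕ) (i : Fin n) :
    sgn (Multiplicative.toAdd (Q n i (xbar n i))).2 = 1 := by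
  rw [Q_of, if_pos rfl]; rfl

theorem Phi_coboundaries (n : ℕ) (f : cocycles₂ (Rep.of (rep n)))
    (hf : f.1 ∈ coboundaries₂ (Rep.of (rep n))) : Phi n f = 0 := by
  obtain ⟨u, hu⟩ := hf
  have hv : f.1 = (d₁₂ (Rep.of (rep n))).hom u := hu.symm
  funext i
  show ((ev n f (xbar n i, xbar n i) i + ev n f (1, 1) i : ℤ) : ZMod 2) = 0
  have e1 : ev n f (xbar n i, xbar n i) i
      = ((Rep.of (rep n)).ρ (xbar n i)) (u (xbar n i)) i - u (xbar n i * xbar n i) i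
        + u (xbar n i) i := by
    show (f.1 _) i = _
    rw [hv]; rfl
  have e2 : ev n f (1, 1) i = ((Rep.of (rep n)).ρ (1 : W n)) (u 1) i - u ((1 : W n) * 1) i
      + u 1 i := by
    show (f.1 _) i = _
    rw [hv]; rfl
  have e3 : ((Rep.of (rep n)).ρ (1 : W n)) (u 1) i = u 1 i := by
    rw [map_one]; rfl
  rw [e1, e2, e3, xbar_mul_self, one_mul, rep_of_coord, sgn_Q_xbar, one_mul]
  rw [show (u (xbar n i) i - u 1 i + u (xbar n i) i) + (u 1 i - u 1 i + u 1 i)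
      = 2 * u (xbar n i) i by ring]
  push_cast
  rw [show ((2 : ZMod 2)) = 0 from rfl, zero_mul]

/-! ### Cocycles in the kernel of `Φ` are coboundaries -/

section Splitting

variable {n : ℕ}

theorem coc (fc : cocycles₂ (Rep.of (rep n))) (g h k : W n) :
    ev n fc (g * h, k) + ev n fc (g, h) = rep n g (ev n fc (h, k)) + ev n fc (g, h * k) :=
  (mem_cocycles₂_iff (A := Rep.of (rep n)) fc.1).1 fc.2 g h k

theorem ev_one_fst (fc : cocycles₂ (Rep.of (rep n))) (g : W n) :
    ev n fc (1, g) = ev n fc (1, 1) :=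
  cocycles₂_map_one_fst fc g

theorem ev_one_snd (fc : cocycles₂ (Rep.of (rep n))) (g : W n) :
    ev n fc (g, 1) = rep n g (ev n fc (1, 1)) :=
  cocycles₂_map_one_snd fc g

/-- The underlying type of the extension group determined by the cocycle `fc`. -/
@[ext] structure Etype (n : ℕ) : Type where
  vec : Fin n → ℤ
  elt : W n

/-- The multiplication of the extension group. -/
def Emul (fc : cocycles₂ (Rep.of (rep n))) (p q : Etype n) : Etype n :=
  ⟨p.vec + rep n p.elt q.vec + ev n fc (p.elt, q.elt), p.elt * q.elt⟩

/-- The group structure on the extension determined by the cocycle `fc`. -/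
def egroup (fc : cocycles₂ (Rep.of (rep n))) : Group (Etype n) where
  mul := Emul fc
  one := ⟨-(ev n fc (1, 1)), 1⟩
  inv p := ⟨-(rep n p.elt⁻¹ p.vec) - ev n fc (1, 1) - ev n fc (p.elt⁻¹, p.elt), p.elt⁻¹⟩
  div p q := Emul fc p ⟨-(rep n q.elt⁻¹ q.vec) - ev n fc (1, 1) - ev n fc (q.elt⁻¹, q.elt), q.elt⁻¹⟩
  div_eq_mul_inv _ _ := rfl
  mul_assoc a b c := by
    show Emul fc (Emul fc a b) c = Emul fc a (Emul fc b c)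
    unfold Emul
    refine Etype.ext ?_ (mul_assoc _ _ _)
    show a.vec + rep n a.elt b.vec + ev n fc (a.elt, b.elt) + rep n (a.elt * b.elt) c.vec
        + ev n fc (a.elt * b.elt, c.elt)
      = a.vec + rep n a.elt (b.vec + rep n b.elt c.vec + ev n fc (b.elt, c.elt)) + ev n fc (a.elt, b.elt * c.elt)
    have h1 : rep n (a.elt * b.elt) c.vec = rep n a.elt (rep n b.elt c.vec) := by
      rw [map_mul]; rfl
    have h2 := coc fc a.elt b.elt c.elt
    rw [map_add, map_add, h1]
    have : ev n fc (a.elt * b.elt, c.elt) = rep n a.elt (ev n fc (b.elt, c.elt)) + ev n fc (a.elt, b.elt * c.elt)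
        - ev n fc (a.elt, b.elt) := by rw [← h2]; ring
    rw [this]
    ring
  one_mul p := by
    show Emul fc ⟨-(ev n fc (1, 1)), 1⟩ p = p
    unfold Emul
    refine Etype.ext ?_ (one_mul _)
    show -(ev n fc (1, 1)) + rep n 1 p.vec + ev n fc (1, p.elt) = p.vec
    rw [map_one, Module.End.one_apply, ev_one_fst fc p.elt]
    show -(ev n fc (1, 1)) + p.vec + ev n fc (1, 1) = p.vec
    ring
  mul_one p := by
    show Emul fc p ⟨-(ev n fc (1, 1)), 1⟩ = p
    unfold Emul
    refine Etype.ext ?_ (mul_one _)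
    show p.vec + rep n p.elt (-(ev n fc (1, 1))) + ev n fc (p.elt, 1) = p.vec
    have h := ev_one_snd fc p.elt
    rw [h, map_neg]
    ring
  inv_mul_cancel p := by
    show Emul fc _ p = ⟨-(ev n fc (1, 1)), 1⟩
    unfold Emul
    refine Etype.ext ?_ (inv_mul_cancel _)
    show -(rep n p.elt⁻¹ p.vec) - ev n fc (1, 1) - ev n fc (p.elt⁻¹, p.elt)
        + rep n p.elt⁻¹ p.vec + ev n fc (p.elt⁻¹, p.elt) = -(ev n fc (1, 1))
    ring

end Splitting

theorem sgn_Q_xbar_ne {n : ℕ} {i l : Fin n} (h : i ≠ l) :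
    sgn (Multiplicative.toAdd (Q n l (xbar n i))).2 = -1 := by
  rw [Q_of, if_neg h]; rfl

theorem offdiag {n : ℕ} (fc : cocycles₂ (Rep.of (rep n))) {i l : Fin n} (hl : l ≠ i) :
    ev n fc (xbar n i, xbar n i) l = -(ev n fc (1, 1) l) := by
  have h := congrFun (coc fc (xbar n i) (xbar n i) (xbar n i)) l
  rw [xbar_mul_self] at h
  have h1 := congrFun (ev_one_fst fc (xbar n i)) l
  have h2 := congrFun (ev_one_snd fc (xbar n i)) l
  have h3 : rep n (xbar n i) (ev n fc (xbar n i, xbar n i)) l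
      = -(ev n fc (xbar n i, xbar n i) l) := by
    rw [rep_coord, sgn_Q_xbar_ne (Ne.symm hl)]; ring
  have h4 : rep n (xbar n i) (ev n fc (1, 1)) l = -(ev n fc (1, 1) l) := by
    rw [rep_coord, sgn_Q_xbar_ne (Ne.symm hl)]; ring
  have h5 : ev n fc (1, xbar n i) l + ev n fc (xbar n i, xbar n i) l
      = rep n (xbar n i) (ev n fc (xbar n i, xbar n i)) l + ev n fc (xbar n i, 1) l := h
  rw [h1, h2, h3, h4] at h5
  linarith

theorem ker_le_coboundaries (n : ℕ) :
    LinearMap.ker (Phi n) ≤ (coboundaries₂ (Rep.of (rep n))).comap (cocycles₂ (Rep.of (rep n))).subtype := by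
  intro fc hker
  rw [LinearMap.mem_ker] at hker
  have heven : ∀ i : Fin n,
      (2 : ℤ) ∣ (ev n fc (xbar n i, xbar n i) i + ev n fc (1, 1) i) := by
    intro i
    have := congrFun hker i
    exact (ZMod.intCast_zmod_eq_zero_iff_dvd _ 2).1 this
  letI := egroup fc
  set mv : Fin n → Fin n → ℤ := fun i l =>
    if l = i then -((ev n fc (xbar n i, xbar n i) i + ev n fc (1, 1) i) / 2) else 0 with hmv
  have hrel : ∀ r ∈ Wrels n,
      FreeGroup.lift (fun i => (⟨mv i, xbar n i⟩ : Etype n)) r = 1 := by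
    rintro r ⟨i, rfl⟩
    rw [map_pow, FreeGroup.lift_apply_of, sq]
    show Emul fc ⟨mv i, xbar n i⟩ ⟨mv i, xbar n i⟩ = ⟨-(ev n fc (1, 1)), 1⟩
    unfold Emul
    refine Etype.ext ?_ (xbar_mul_self n i)
    funext l
    show mv i l + rep n (xbar n i) (mv i) l + ev n fc (xbar n i, xbar n i) l
        = -(ev n fc (1, 1) l)
    rw [rep_coord]
    by_cases hl : l = i
    · subst hl
      rw [sgn_Q_xbar]
      have h2 : 2 * ((ev n fc (xbar n l, xbar n l) l + ev n fc (1, 1) l) / 2)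
          = ev n fc (xbar n l, xbar n l) l + ev n fc (1, 1) l :=
        Int.mul_ediv_cancel' (heven l)
      have hmvl : mv l l = -((ev n fc (xbar n l, xbar n l) l + ev n fc (1, 1) l) / 2) := by
        rw [hmv]; simp
      rw [hmvl]
      linarith
    · have hmvl : mv i l = 0 := by rw [hmv]; simp [hl]
      rw [hmvl, sgn_Q_xbar_ne fun hh => hl hh.symm, offdiag fc hl]
      ring
  set σ := PresentedGroup.toGroup hrel with hσ
  have hof : ∀ i, σ (xbar n i) = ⟨mv i, xbar n i⟩ := fun i => PresentedGroup.toGroup.of hrel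
  let pe : Etype n →* W n :=
    { toFun := Etype.elt, map_one' := rfl, map_mul' := fun _ _ => rfl }
  have hcomp : pe.comp σ = MonoidHom.id (W n) := by
    refine PresentedGroup.ext fun i => ?_
    rw [MonoidHom.comp_apply]
    show pe (σ (xbar n i)) = _
    rw [hof i]
    rfl
  have hsnd : ∀ g : W n, (σ g).elt = g := fun g => DFunLike.congr_fun hcomp g
  suffices hs : ∀ g h : W n,
      (d₁₂ (Rep.of (rep n))).hom (fun g => -(σ g).vec) (g, h) = ev n fc (g, h) from
    ⟨fun g => -(σ g).vec, funext fun p => hs p.1 p.2⟩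
  intro g h
  have hmul := map_mul σ g h
  have h1 : (σ (g * h)).vec = (σ g).vec + rep n (σ g).elt ((σ h).vec) + ev n fc ((σ g).elt, (σ h).elt) :=
    congrArg Etype.vec hmul
  rw [hsnd g, hsnd h] at h1
  show rep n g (-(σ h).vec) - -(σ (g * h)).vec + -(σ g).vec = ev n fc (g, h)
  rw [map_neg, h1]
  ring

/-! ### Conclusion -/

theorem coboundaries_eq_ker (n : ℕ) :
    (coboundaries₂ (Rep.of (rep n))).comap (cocycles₂ (Rep.of (rep n))).subtype = LinearMap.ker (Phi n) :=
  le_antisymm (fun f hf => LinearMap.mem_ker.2 (Phi_coboundaries n f hf))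
    (ker_le_coboundaries n)

/-- `H²(W_n, ℤⁿ) ≅ (ℤ/2)ⁿ` for the action given by `ρ`. -/
theorem stmt13 (n : ℕ) :
    Nonempty (groupCohomology.H2 (Rep.of (rep n)) ≃+ (Fin n → ZMod 2)) := by
  have hsurj : Function.Surjective (H2π (Rep.of (rep n))).hom :=
    (ModuleCat.epi_iff_surjective _).1 inferInstance
  have hker : LinearMap.ker (H2π (Rep.of (rep n))).hom = LinearMap.ker (Phi n) := by
    rw [← coboundaries_eq_ker]
    ext x
    exact LinearMap.mem_ker.trans (H2π_eq_zero_iff x)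
  exact ⟨((((H2π (Rep.of (rep n))).hom.quotKerEquivOfSurjective hsurj).symm.trans
    (Submodule.quotEquivOfEq _ _ hker)).trans
    ((Phi n).quotKerEquivOfSurjective (Phi_surjective n))).toAddEquiv⟩
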